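/- Let q, t be nonzero complex numbers. For every ℓ ≥ 2, the determinant of the deformed Cartan matrix C(q,t) of type B_ℓ equals q^{2ℓ−1} t^{−ℓ} + q^{−(2ℓ−1)} t^{ℓ}. (This is the type-B_ℓ entry of the determinant table in Section 4 of the paper, used to evaluate the Kac determinant.) -/

import Mathlib

/-- The deformed Cartan matrix of type `B_ℓ` (indexing `0,…,ℓ-1`; the last index is the
short simple root): `C_{ii} = q²t⁻¹ + q⁻²t` except `C_{ℓ-1,ℓ-1} = qt⁻¹ + q⁻¹t`;
super-diagonal entries `-1`; sub-diagonal entries `-1` except the last one, which is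
`-(q + q⁻¹)`; and `0` elsewhere. -/
noncomputable def cartanB (l : ℕ) (q t : ℂ) : Matrix (Fin l) (Fin l) ℂ :=
  Matrix.of fun i j =>
    if i = j then
      (if (i : ℕ) = l - 1 then q * t⁻¹ + q⁻¹ * t else q ^ 2 * t⁻¹ + q⁻¹ ^ 2 * t)
    else if (i : ℕ) + 1 = (j : ℕ) then -1
    else if (j : ℕ) + 1 = (i : ℕ) then
      (if (i : ℕ) = l - 1 then -(q + q⁻¹) else -1)
    else 0

lemma cartanB_sub (l : ℕ) (q t : ℂ) :
    (cartanB (l+1) q t).submatrix Fin.succ Fin.succ = cartanB l q t := by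
  ext i j
  have hi := i.isLt
  simp only [cartanB, Matrix.submatrix_apply, Matrix.of_apply, Fin.succ_inj, Fin.val_succ,
    Nat.add_sub_cancel, add_left_inj]
  have h1 : ((i:ℕ)+1 = l) ↔ ((i:ℕ) = l - 1) := by omega
  simp only [h1]

lemma succAbove_one_zero (n : ℕ) : (1 : Fin (n+3)).succAbove 0 = 0 := rfl

lemma succAbove_one_succ (n : ℕ) (j : Fin (n+1)) :
    (1 : Fin (n+3)).succAbove j.succ = j.succ.succ := by
  rw [← Fin.succ_zero_eq_one, Fin.succ_succAbove_succ, Fin.succAbove_zero]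

lemma detN (n : ℕ) (q t : ℂ) :
    ((cartanB (n+3) q t).submatrix Fin.succ (Fin.succAbove 1)).det
      = -(cartanB (n+1) q t).det := by
  rw [Matrix.det_succ_column_zero, Fin.sum_univ_succ]
  have h10 : (cartanB (n+3) q t).submatrix Fin.succ (Fin.succAbove 1) 0 0 = -1 := by
    simp only [Matrix.submatrix_apply, succAbove_one_zero]
    simp [cartanB, Fin.ext_iff]
  have hrest : ∀ i : Fin (n+1),
      (cartanB (n+3) q t).submatrix Fin.succ (Fin.succAbove 1) i.succ 0 = 0 := by
    intro i
    simp only [Matrix.submatrix_apply, succAbove_one_zero]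
    simp only [cartanB, Matrix.of_apply]
    rw [if_neg (by simp only [Fin.ext_iff, Fin.val_succ, Fin.val_zero]; omega),
      if_neg (by simp only [Fin.ext_iff, Fin.val_succ, Fin.val_zero]; omega),
      if_neg (by simp only [Fin.ext_iff, Fin.val_succ, Fin.val_zero]; omega)]
  have hsub : ((cartanB (n+3) q t).submatrix Fin.succ (Fin.succAbove 1)).submatrix
      (Fin.succAbove 0) Fin.succ = cartanB (n+1) q t := by
    rw [Fin.succAbove_zero, Matrix.submatrix_submatrix]
    have : (Fin.succAbove (1 : Fin (n+3))) ∘ Fin.succ = Fin.succ ∘ Fin.succ := by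
      funext j; exact succAbove_one_succ n j
    rw [this, ← Matrix.submatrix_submatrix, cartanB_sub, cartanB_sub]
  simp only [hrest, mul_zero, zero_mul, Finset.sum_const_zero, add_zero, h10, hsub,
    Fin.val_zero, pow_zero, one_mul]
  ring

lemma cartanB_rec (n : ℕ) (q t : ℂ) :
    (cartanB (n+3) q t).det =
      (q ^ 2 * t⁻¹ + q⁻¹ ^ 2 * t) * (cartanB (n+2) q t).det - (cartanB (n+1) q t).det := by
  rw [Matrix.det_succ_row_zero, Fin.sum_univ_succ, Fin.sum_univ_succ]
  have h00 : cartanB (n+3) q t 0 0 = q ^ 2 * t⁻¹ + q⁻¹ ^ 2 * t := by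
    simp [cartanB]
  have h01 : cartanB (n+3) q t (0 : Fin (n+3)) ((0 : Fin (n+2)).succ) = -1 := by
    simp [cartanB, Fin.ext_iff]
  have hrest : ∀ j : Fin (n+1), cartanB (n+3) q t 0 j.succ.succ = 0 := by
    intro j
    simp only [cartanB, Matrix.of_apply]
    rw [if_neg (by simp only [Fin.ext_iff, Fin.val_succ, Fin.val_zero]; omega),
      if_neg (by simp only [Fin.ext_iff, Fin.val_succ, Fin.val_zero]; omega),
      if_neg (by simp only [Fin.ext_iff, Fin.val_succ, Fin.val_zero]; omega)]
  have hm0 : (cartanB (n+3) q t).submatrix Fin.succ (Fin.succAbove 0) = cartanB (n+2) q t := by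
    rw [Fin.succAbove_zero, cartanB_sub]
  have hm1 : ((cartanB (n+3) q t).submatrix Fin.succ ((0 : Fin (n+2)).succ).succAbove).det
      = -(cartanB (n+1) q t).det := by
    rw [Fin.succ_zero_eq_one]; exact detN n q t
  rw [h00, h01, hm0, hm1]
  simp only [hrest, mul_zero, zero_mul, Finset.sum_const_zero, add_zero,
    Fin.val_zero, Fin.val_succ, pow_zero, one_mul, pow_one]
  ring

lemma base1 (q t : ℂ) : (cartanB 1 q t).det = q * t⁻¹ + q⁻¹ * t := by
  rw [Matrix.det_fin_one]; simp [cartanB]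

lemma base2 (q t : ℂ) (hq : q ≠ 0) (ht : t ≠ 0) :
    (cartanB 2 q t).det = q ^ 3 * t⁻¹ ^ 2 + q⁻¹ ^ 3 * t ^ 2 := by
  rw [Matrix.det_fin_two]
  have h00 : cartanB 2 q t 0 0 = q ^ 2 * t⁻¹ + q⁻¹ ^ 2 * t := by simp [cartanB]
  have h01 : cartanB 2 q t 0 1 = -1 := by simp [cartanB, Fin.ext_iff]
  have h10 : cartanB 2 q t 1 0 = -(q + q⁻¹) := by simp [cartanB, Fin.ext_iff]
  have h11 : cartanB 2 q t 1 1 = q * t⁻¹ + q⁻¹ * t := by simp [cartanB]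
  rw [h00, h01, h10, h11]
  have h1 : q * q⁻¹ = 1 := mul_inv_cancel₀ hq
  have h2 : t * t⁻¹ = 1 := mul_inv_cancel₀ ht
  linear_combination (q + q⁻¹) * (t * t⁻¹) * h1 + (q + q⁻¹) * h2

lemma step_alg (q t : ℂ) (hq : q ≠ 0) (ht : t ≠ 0) (n : ℕ) :
    (q ^ 2 * t⁻¹ + q⁻¹ ^ 2 * t) * (q ^ (2*n+3) * t⁻¹ ^ (n+2) + q⁻¹ ^ (2*n+3) * t ^ (n+2))
      - (q ^ (2*n+1) * t⁻¹ ^ (n+1) + q⁻¹ ^ (2*n+1) * t ^ (n+1))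
      = q ^ (2*n+5) * t⁻¹ ^ (n+3) + q⁻¹ ^ (2*n+5) * t ^ (n+3) := by
  have h1 : q * q⁻¹ = 1 := mul_inv_cancel₀ hq
  have h2 : t * t⁻¹ = 1 := mul_inv_cancel₀ ht
  linear_combination (q⁻¹^(2*n+1)*t^(n+1) + q^(2*n+1)*t⁻¹^(n+1)) * ((q*q⁻¹+1)*(t*t⁻¹)) * h1
    + (q⁻¹^(2*n+1)*t^(n+1) + q^(2*n+1)*t⁻¹^(n+1)) * h2

lemma key (q t : ℂ) (hq : q ≠ 0) (ht : t ≠ 0) : ∀ n : ℕ,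
    (cartanB (n+1) q t).det = q ^ (2*(n+1)-1) * t⁻¹ ^ (n+1) + q⁻¹ ^ (2*(n+1)-1) * t ^ (n+1) ∧
    (cartanB (n+2) q t).det = q ^ (2*(n+2)-1) * t⁻¹ ^ (n+2) + q⁻¹ ^ (2*(n+2)-1) * t ^ (n+2) := by
  intro n
  induction n with
  | zero =>
    refine ⟨?_, ?_⟩
    · simpa using base1 q t
    · simpa using base2 q t hq ht
  | succ n ih =>
    obtain ⟨ih1, ih2⟩ := ih
    have h2 : 2*(n+1+1)-1 = 2*n+3 := by omega
    have h3 : 2*(n+1+2)-1 = 2*n+5 := by omega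
    have h1 : 2*(n+1)-1 = 2*n+1 := by omega
    refine ⟨by rw [h2] at ih2 ⊢; exact ih2, ?_⟩
    have hr := cartanB_rec n q t
    rw [h2] at ih2; rw [h1] at ih1
    rw [h3]
    show (cartanB (n+3) q t).det = _
    rw [hr, ih1, ih2, step_alg q t hq ht n]

/-- The type-`B_ℓ` entry of the determinant table in Section 4 of the paper:
`det C(q,t) = q^{2ℓ-1} t^{-ℓ} + q^{-(2ℓ-1)} t^{ℓ}`. -/
theorem stmt10 (q t : ℂ) (hq : q ≠ 0) (ht : t ≠ 0) (l : ℕ) (hl : 2 ≤ l) :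
    (cartanB l q t).det = q ^ (2 * l - 1) * t⁻¹ ^ l + q⁻¹ ^ (2 * l - 1) * t ^ l := by
  obtain ⟨n, rfl⟩ : ∃ n, l = n + 2 := ⟨l - 2, by omega⟩
  exact (key q t hq ht n).2
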